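/- For s generic points in ℙ^r (a generic choice of the s(r+1) homogeneous coordinates), the defining ideal I contains no nonzero form of degree d ≤ s supported on at most s monomials; equivalently, for each d ≤ s, every maximal minor of the s × C(r+d,r) evaluation matrix X_d (rows indexed by points, columns by degree-d monomials, entries the monomial evaluated at the point) is nonzero. -/

import Mathlib

open MvPolynomial

noncomputable section Stmt16Aux

namespace Stmt16

variable {k : Type*} [Field k] (r s : ℕ)

/-- Embed an exponent vector on `Fin (r+1)` into the variables of row `i`. -/
def emb (i : Fin s) (α : Fin (r + 1) →₀ ℕ) : (Fin s × Fin (r + 1)) →₀ ℕ :=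
  α.mapDomain fun j => (i, j)

lemma emb_inj (i : Fin s) : Function.Injective (fun j : Fin (r + 1) => (i, j)) :=
  fun a b h => by simpa using h

lemma emb_apply (i q : Fin s) (α : Fin (r + 1) →₀ ℕ) (l : Fin (r + 1)) :
    emb r s i α (q, l) = if q = i then α l else 0 := by
  rcases eq_or_ne q i with rfl | h
  · simp [emb, Finsupp.mapDomain_apply (emb_inj r s q)]
  · rw [if_neg h]
    refine Finsupp.mapDomain_notin_range _ _ ?_
    rintro ⟨j, hj⟩
    exact h (by simpa using (congrArg Prod.fst hj).symm)

lemma prod_monomial_one {ι : Type*} (t : Finset ι)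
    (e : ι → ((Fin s × Fin (r + 1)) →₀ ℕ)) :
    (∏ i ∈ t, (monomial (e i) (1 : k))) = monomial (∑ i ∈ t, e i) 1 := by
  classical
  induction t using Finset.cons_induction with
  | empty => simp
  | cons a t ha ih => rw [Finset.prod_cons, Finset.sum_cons, ih, monomial_mul, one_mul]

lemma sum_emb_apply {m : ℕ} (row : Fin m → Fin s) (hrow : Function.Injective row)
    (col : Fin m → (Fin (r + 1) →₀ ℕ)) (σ : Equiv.Perm (Fin m)) (j : Fin m)
    (l : Fin (r + 1)) :
    (∑ i : Fin m, emb r s (row (σ i)) (col i)) (row j, l) = col (σ⁻¹ j) l := by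
  classical
  rw [Finsupp.finset_sum_apply]
  have : ∀ i : Fin m, emb r s (row (σ i)) (col i) (row j, l)
      = if i = σ⁻¹ j then col i l else 0 := by
    intro i
    rw [emb_apply]
    congr 1
    simp only [eq_iff_iff]
    constructor
    · intro h
      have hji := hrow h
      rw [hji]
      exact (Equiv.symm_apply_apply σ i).symm
    · rintro rfl
      rw [← Equiv.Perm.mul_apply, mul_inv_cancel, Equiv.Perm.one_apply]
  rw [Finset.sum_congr rfl fun i _ => this i, Finset.sum_ite_eq' Finset.univ]
  simp

/-- The determinant of a matrix of distinct generic monomials is nonzero. -/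
lemma det_ne_zero {m : ℕ} (row : Fin m → Fin s) (hrow : Function.Injective row)
    (col : Fin m → (Fin (r + 1) →₀ ℕ)) (hcol : Function.Injective col) :
    (Matrix.of fun i j : Fin m =>
      (monomial (emb r s (row i) (col j)) (1 : k))).det ≠ 0 := by
  classical
  intro h0
  set μ : (Fin s × Fin (r + 1)) →₀ ℕ := ∑ i : Fin m, emb r s (row i) (col i) with hμ
  have key : ∀ σ : Equiv.Perm (Fin m),
      (∑ i : Fin m, emb r s (row (σ i)) (col i)) = μ → σ = 1 := by
    intro σ hσ
    have hc : ∀ j : Fin m, col (σ⁻¹ j) = col j := by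
      intro j
      ext l
      have h1 := sum_emb_apply r s row hrow col σ j l
      have h2 := sum_emb_apply r s row hrow col 1 j l
      simp only [Equiv.Perm.one_apply] at h2
      rw [hσ] at h1
      rw [hμ] at h1
      rw [h1] at h2
      exact h2
    have : ∀ j, σ⁻¹ j = j := fun j => hcol (hc j)
    have hσinv : σ⁻¹ = 1 := Equiv.ext this
    calc σ = (σ⁻¹)⁻¹ := by rw [inv_inv]
    _ = 1 := by rw [hσinv]; rfl
  have hcoeff : coeff μ ((Matrix.of fun i j : Fin m =>
      (monomial (emb r s (row i) (col j)) (1 : k))).det) = 1 := by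
    rw [Matrix.det_apply]
    rw [coeff_sum]
    have hterm : ∀ σ : Equiv.Perm (Fin m),
        (∏ i : Fin m, (Matrix.of fun i j : Fin m =>
          (monomial (emb r s (row i) (col j)) (1 : k))) (σ i) i)
        = monomial (∑ i : Fin m, emb r s (row (σ i)) (col i)) 1 := by
      intro σ
      rw [← prod_monomial_one]
      rfl
    rw [Finset.sum_eq_single (1 : Equiv.Perm (Fin m))]
    · rw [coeff_smul, hterm, coeff_monomial, if_pos]
      · simp
      · simp [hμ]
    · intro σ _ hσ
      rw [coeff_smul, hterm, coeff_monomial, if_neg, smul_zero]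
      intro h
      exact hσ (key σ h)
    · intro h; exact absurd (Finset.mem_univ _) h
  rw [h0, coeff_zero] at hcoeff
  exact zero_ne_one hcoeff

/-- The finset of exponent vectors of total degree `d`. -/
def Dd (d : ℕ) : Finset (Fin (r + 1) →₀ ℕ) :=
  (Finset.Iic (Finsupp.equivFunOnFinite.symm fun _ => d)).filter fun α => α.degree = d

lemma mem_Dd {d : ℕ} {α : Fin (r + 1) →₀ ℕ} (h : α.degree = d) : α ∈ Dd r d := by
  rw [Dd, Finset.mem_filter, Finset.mem_Iic]
  refine ⟨?_, h⟩
  intro j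
  simpa [h] using Finsupp.le_degree j α

/-- The generic square submatrix, for a set `T` of exponent vectors of size
`min s (Dd r d).card`. -/
def genMat (d : ℕ) (T : Finset (Fin (r + 1) →₀ ℕ))
    (hT : T.card = min s ((Dd r d).card)) :
    Matrix (Fin (min s ((Dd r d).card))) (Fin (min s ((Dd r d).card)))
      (MvPolynomial (Fin s × Fin (r + 1)) k) :=
  Matrix.of fun i j =>
    (monomial (emb r s (Fin.castLE (min_le_left _ _) i)
      (((T.equivFinOfCardEq hT).symm j : T) : Fin (r + 1) →₀ ℕ)) (1 : k))

lemma genMat_det_ne_zero (d : ℕ) (T : Finset (Fin (r + 1) →₀ ℕ))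
    (hT : T.card = min s ((Dd r d).card)) : (genMat (k := k) r s d T hT).det ≠ 0 :=
  det_ne_zero r s _ (Fin.castLE_injective _) _
    (Subtype.val_injective.comp (T.equivFinOfCardEq hT).symm.injective)

/-- The generic polynomial: product of all the relevant maximal minors. -/
def Pgen : MvPolynomial (Fin s × Fin (r + 1)) k :=
  ∏ d ∈ Finset.range (s + 1),
    ∏ T ∈ ((Dd r d).powersetCard (min s ((Dd r d).card))).attach,
      (genMat (k := k) r s d T.1 (Finset.mem_powersetCard.mp T.2).2).det

lemma Pgen_ne_zero : (Pgen (k := k) r s) ≠ 0 := by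
  rw [Pgen]
  rw [Finset.prod_ne_zero_iff]
  intro d _
  rw [Finset.prod_ne_zero_iff]
  intro T _
  exact genMat_det_ne_zero r s d T.1 _

lemma eval_emb (A : Fin s → Fin (r + 1) → k) (i : Fin s) (α : Fin (r + 1) →₀ ℕ) :
    eval (fun q : Fin s × Fin (r + 1) => A q.1 q.2) (monomial (emb r s i α) (1 : k))
      = eval (A i) (monomial α 1) := by
  rw [eval_monomial, eval_monomial, emb,
    Finsupp.prod_mapDomain_index_inj (emb_inj r s i)]

end Stmt16

end Stmt16Aux

theorem stmt16 {k : Type*} [Field k] [IsAlgClosed k] [CharZero k] (r s : ℕ) :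
    ∃ P : MvPolynomial (Fin s × Fin (r + 1)) k, P ≠ 0 ∧
      ∀ A : Fin s → Fin (r + 1) → k,
        eval (fun q : Fin s × Fin (r + 1) => A q.1 q.2) P ≠ 0 →
          ∀ d ≤ s, ∀ f ∈ vanishingIdeal k
              { x : Fin (r + 1) → k | ∃ (i : Fin s) (t : k), x = t • A i },
            f ≠ 0 → f.IsHomogeneous d → s < f.support.card := by
  classical
  refine ⟨Stmt16.Pgen r s, Stmt16.Pgen_ne_zero r s, ?_⟩
  intro A hA d hd f hf hf0 hhom
  by_contra hcard
  push_neg at hcard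
  set A' : Fin s × Fin (r + 1) → k := fun q => A q.1 q.2 with hA'
  set m := min s ((Stmt16.Dd r d).card) with hm
  have hsupp : f.support ⊆ Stmt16.Dd r d := by
    intro α hα
    apply Stmt16.mem_Dd
    have h1 := hhom (mem_support_iff.mp hα)
    rw [Finsupp.degree_eq_weight_one]
    exact h1
  have hm1 : f.support.card ≤ m := le_min hcard (Finset.card_le_card hsupp)
  obtain ⟨T, hsubT, hTsub, hTcard⟩ :=
    Finset.exists_subsuperset_card_eq hsupp hm1 (min_le_right _ _)
  have hTmem : T ∈ (Stmt16.Dd r d).powersetCard m :=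
    Finset.mem_powersetCard.mpr ⟨hTsub, hTcard⟩
  -- the corresponding minor evaluates to something nonzero
  have hdet0 : eval A' ((Stmt16.genMat (k := k) r s d T hTcard).det) ≠ 0 := by
    intro h0
    apply hA
    show eval A' (Stmt16.Pgen r s) = 0
    rw [Stmt16.Pgen, map_prod]
    refine Finset.prod_eq_zero (Finset.mem_range.mpr (Nat.lt_succ_of_le hd)) ?_
    rw [map_prod]
    exact Finset.prod_eq_zero (Finset.mem_attach _ ⟨T, hTmem⟩) h0
  set e := T.equivFinOfCardEq hTcard with he
  set col : Fin m → (Fin (r + 1) →₀ ℕ) := fun j => ((e.symm j : T) : Fin (r + 1) →₀ ℕ)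
    with hcol
  set N : Matrix (Fin m) (Fin m) k :=
    (Stmt16.genMat (k := k) r s d T hTcard).map (eval A') with hN
  have hNdet : N.det ≠ 0 := by
    have hEq : N = (eval A' : MvPolynomial (Fin s × Fin (r + 1)) k →+* k).mapMatrix
        (Stmt16.genMat (k := k) r s d T hTcard) := rfl
    rw [hEq, ← RingHom.map_det]
    exact hdet0
  set v : Fin m → k := fun j => coeff (col j) f with hv
  have hmul : N.mulVec v = 0 := by
    funext i
    set pt : Fin (r + 1) → k := A (Fin.castLE (min_le_left s _) i) with hpt
    have hNij : ∀ j, N i j = eval pt (monomial (col j) 1) := by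
      intro j
      rw [hN]
      show eval A' ((Stmt16.genMat (k := k) r s d T hTcard) i j)
        = eval pt (monomial (col j) 1)
      rw [Stmt16.genMat]
      exact Stmt16.eval_emb r s A _ _
    have step1 : N.mulVec v i = ∑ j : Fin m, eval pt (monomial (col j) 1) * coeff (col j) f := by
      simp only [Matrix.mulVec, dotProduct, hv]
      exact Finset.sum_congr rfl fun j _ => by rw [hNij j]
    have step2 : ∑ j : Fin m, eval pt (monomial (col j) 1) * coeff (col j) f
        = ∑ α ∈ T, eval pt (monomial α 1) * coeff α f := by
      rw [← Finset.sum_coe_sort T (fun α => eval pt (monomial α 1) * coeff α f)]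
      exact Equiv.sum_comp e.symm (fun x : T => eval pt (monomial (x : Fin (r + 1) →₀ ℕ) 1)
        * coeff (x : Fin (r + 1) →₀ ℕ) f)
    have step3 : ∑ α ∈ T, eval pt (monomial α 1) * coeff α f = eval pt f := by
      rw [← Finset.sum_subset hsubT (fun α _ hαs => by
        rw [notMem_support_iff.mp hαs, mul_zero])]
      rw [eval_eq]
      refine Finset.sum_congr rfl fun α _ => ?_
      rw [eval_monomial, one_mul, mul_comm]
      rfl
    have hzero : eval pt f = 0 := by
      refine hf pt ?_
      exact ⟨_, 1, (one_smul k _).symm⟩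
    show N.mulVec v i = 0
    rw [step1, step2, step3, hzero]
  have hv0 : v = 0 := Matrix.eq_zero_of_mulVec_eq_zero hNdet hmul
  obtain ⟨α, hα⟩ : f.support.Nonempty :=
    Finset.nonempty_iff_ne_empty.mpr fun h => hf0 (support_eq_empty.mp h)
  have hαT : α ∈ T := hsubT hα
  have : coeff α f = 0 := by
    have := congrFun hv0 (e ⟨α, hαT⟩)
    simpa [hv, hcol] using this
  exact mem_support_iff.mp hα this
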